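/- For a ≥ 2 and n ≥ 1 with n odd and n > 1, the sequence (S_n(m) mod 2^a)_{m≥1} is periodic with exact period 2^a; that is, S_n(m + 2^a) ≡ S_n(m) (mod 2^a) for all m ≥ 1, and there exists m with S_n(m + 2^(a-1)) ≢ S_n(m) (mod 2^a). -/

import Mathlib

def S (n m : ℕ) : ℕ := ∑ i ∈ Finset.Icc 1 m, i ^ n

-- binomial with nilpotent square
lemma binom_nilp {R : Type*} [CommRing R] (x h : R) (hh : h ^ 2 = 0) (m : ℕ) :
    (x + h) ^ (m + 1) = x ^ (m + 1) + (m + 1 : ℕ) * h * x ^ m := by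
  induction m with
  | zero => simp [pow_succ]
  | succ m ih =>
    calc (x + h) ^ (m + 2) = (x ^ (m + 1) + (m + 1 : ℕ) * h * x ^ m) * (x + h) := by
          rw [pow_succ, ih]
      _ = x ^ (m + 2) + (m + 2 : ℕ) * h * x ^ (m + 1) + ((m + 1 : ℕ) * x ^ m) * h ^ 2 := by
          push_cast; ring
      _ = x ^ (m + 2) + (m + 2 : ℕ) * h * x ^ (m + 1) := by rw [hh]; ring

-- sum over range P of cast = sum over univ
lemma sum_range_cast {P : ℕ} [NeZero P] {M : Type*} [AddCommMonoid M] (f : ZMod P → M) :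
    ∑ j ∈ Finset.range P, f (j : ZMod P) = ∑ x : ZMod P, f x := by
  refine Finset.sum_nbij' (fun j => (j : ZMod P)) (fun x => x.val) ?_ ?_ ?_ ?_ ?_
  · intro j hj; exact Finset.mem_univ _
  · intro x _; exact Finset.mem_range.mpr (ZMod.val_lt x)
  · intro j hj; exact ZMod.val_cast_of_lt (Finset.mem_range.mp hj)
  · intro x _; exact ZMod.natCast_zmod_val x
  · intro j _; rfl

theorem stmt11 (a n : ℕ) (ha : 2 ≤ a) (hn : 1 < n) (hodd : Odd n) :
    (∀ m, 1 ≤ m → S n (m + 2 ^ a) ≡ S n m [MOD 2 ^ a]) ∧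
    ∃ m, 1 ≤ m ∧ ¬ S n (m + 2 ^ (a - 1)) ≡ S n m [MOD 2 ^ a] := by
  have hP : (0:ℕ) < 2 ^ a := Nat.pow_pos (by norm_num)
  haveI : NeZero (2 ^ a) := ⟨hP.ne'⟩
  set R := ZMod (2 ^ a)
  -- key: x + x = 0 → x ^ n = 0 in R
  have key0 : ∀ x : R, x + x = 0 → x ^ n = 0 := by
    intro x hx
    have hv : x = ((x.val : ℕ) : R) := (ZMod.natCast_zmod_val x).symm
    have h2 : ((2 * x.val : ℕ) : R) = ((0 : ℕ) : R) := by
      rw [Nat.cast_mul, Nat.cast_two, two_mul, ← hv, hx, Nat.cast_zero]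
    have hdvd : 2 ^ a ∣ 2 * x.val := by
      have := (ZMod.natCast_eq_natCast_iff _ _ _).mp h2
      simpa [Nat.ModEq, Nat.mod_self] using (Nat.modEq_zero_iff_dvd.mp this)
    obtain ⟨c, hc⟩ : 2 ^ (a - 1) ∣ x.val := by
      obtain ⟨k, hk⟩ := hdvd
      have h2a : 2 ^ (a - 1) * 2 = 2 ^ a := by
        rw [← pow_succ]; congr 1; omega
      refine ⟨k, ?_⟩
      have h2 : 2 * x.val = 2 * (2 ^ (a - 1) * k) := by
        rw [hk, ← h2a]; ring
      exact Nat.eq_of_mul_eq_mul_left (by norm_num) h2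
    have hxn : x ^ n = ((2 ^ (a - 1) * c : ℕ) : R) ^ n := by rw [← hc, ← hv]
    rw [hxn]
    have : ((2 ^ (a - 1) * c : ℕ) : R) ^ n = (((2 ^ (a - 1) * c) ^ n : ℕ) : R) := by rw [Nat.cast_pow]
    rw [this, ZMod.natCast_eq_zero_iff]
    have hge : a ≤ (a - 1) * n := by
      have : 2 * (a - 1) ≤ (a-1) * n := by nlinarith
      omega
    calc 2 ^ a ∣ 2 ^ ((a - 1) * n) := pow_dvd_pow 2 hge
      _ ∣ (2 ^ (a - 1) * c) ^ n := by rw [mul_pow, ← pow_mul]; exact dvd_mul_right _ _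
  -- sum of x^n over all of R is 0
  have hsum : ∑ x : R, x ^ n = 0 := by
    apply Finset.sum_ninvolution (fun x => -x)
    · intro x
      rw [hodd.neg_pow]; ring
    · intro x hx hnx
      exact hx (key0 x (by linear_combination -hnx))
    · intro x; exact Finset.mem_univ _
    · intro x; exact neg_neg x
  -- S recurrence
  have hSrec : ∀ m, S n (m + 1) = S n m + (m + 1) ^ n := by
    intro m
    unfold S
    rw [← Finset.Ico_add_one_right_eq_Icc, Finset.sum_Ico_succ_top (by omega), Finset.Ico_add_one_right_eq_Icc]
  -- S additivity over an interval
  have hSadd : ∀ m k, S n (m + k) = S n m + ∑ j ∈ Finset.range k, (m + 1 + j) ^ n := by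
    intro m k
    induction k with
    | zero => simp
    | succ k ih =>
      rw [← add_assoc, hSrec, ih, Finset.sum_range_succ]
      have : m + k + 1 = m + 1 + k := by omega
      rw [this, add_assoc]
  constructor
  · intro m _
    rw [← ZMod.natCast_eq_natCast_iff]
    rw [hSadd m (2 ^ a)]
    push_cast
    have : ∑ j ∈ Finset.range (2 ^ a), ((m : R) + 1 + (j : R)) ^ n = 0 := by
      rw [sum_range_cast (P := 2 ^ a) (fun x : R => ((m : R) + 1 + x) ^ n)]
      have he := Equiv.sum_comp (Equiv.addLeft ((m : R) + 1)) (fun x : R => x ^ n)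
      simp only [Equiv.coe_addLeft] at he
      rw [he]
      exact hsum
    rw [this, add_zero]
  · -- exact period part
    by_contra hcon
    push_neg at hcon
    have h2 := hcon 2 (by norm_num)
    have h3 := hcon 3 (by norm_num)
    set q := 2 ^ (a - 1) with hq
    have h32 : S n (3 + q) = S n (2 + q) + (3 + q) ^ n := by
      have : 3 + q = (2 + q) + 1 := by ring
      rw [this, hSrec]
    have hS3 : S n 3 = S n 2 + 3 ^ n := hSrec 2
    -- derive (3+q)^n ≡ 3^n [MOD 2^a]
    have hcong : (3 + q) ^ n ≡ 3 ^ n [MOD 2 ^ a] := by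
      have e1 : S n 2 + (3 + q) ^ n ≡ S n 2 + 3 ^ n [MOD 2 ^ a] := by
        calc S n 2 + (3 + q) ^ n ≡ S n (2 + q) + (3 + q) ^ n [MOD 2 ^ a] :=
              (h2.symm).add_right _
          _ = S n (3 + q) := h32.symm
          _ ≡ S n 3 [MOD 2 ^ a] := h3
          _ = S n 2 + 3 ^ n := hS3
      exact e1.add_left_cancel' _
    -- move to R
    have hq2 : ((q : ℕ) : R) ^ 2 = 0 := by
      rw [← Nat.cast_pow, ZMod.natCast_eq_zero_iff, hq, ← pow_mul]
      exact pow_dvd_pow 2 (by omega)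
    have hcast : ((3 : R) + (q : ℕ)) ^ n = (3 : R) ^ n := by
      have := (ZMod.natCast_eq_natCast_iff _ _ _).mpr hcong
      push_cast at this
      exact this
    obtain ⟨m0, hm0⟩ : ∃ m0, n = m0 + 1 := ⟨n - 1, by omega⟩
    rw [hm0, binom_nilp (3 : R) ((q : ℕ) : R) hq2 m0] at hcast
    have hz : (((m0 + 1) * q * 3 ^ m0 : ℕ) : R) = 0 := by
      simp only [Nat.cast_mul, Nat.cast_add, Nat.cast_one, Nat.cast_pow, Nat.cast_ofNat] at hcast
      rw [Nat.cast_mul ((m0 + 1) * q), Nat.cast_mul (m0 + 1) q, Nat.cast_pow 3 m0, Nat.cast_ofNat, Nat.cast_add, Nat.cast_one]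
      linear_combination hcast
    rw [ZMod.natCast_eq_zero_iff] at hz
    -- 2^a ∣ (m0+1) * 2^(a-1) * 3^m0, with m0+1 = n odd, 3^m0 odd
    have hodd' : Odd ((m0 + 1) * 3 ^ m0) := by
      have h1 : Odd (m0 + 1) := hm0 ▸ hodd
      exact h1.mul (Odd.pow (⟨1, by norm_num⟩ : Odd 3))
    have h2dvd : 2 ∣ (m0 + 1) * 3 ^ m0 := by
      have ha1 : 2 ^ a = 2 ^ (a - 1) * 2 := by
        rw [← pow_succ]
        congr 1
        omega
      rw [ha1, hq] at hz
      have : 2 ^ (a - 1) * 2 ∣ 2 ^ (a - 1) * ((m0 + 1) * 3 ^ m0) := by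
        have : (m0 + 1) * (2 ^ (a-1)) * 3 ^ m0 = 2 ^ (a - 1) * ((m0 + 1) * 3 ^ m0) := by ring
        rwa [this] at hz
      exact (mul_dvd_mul_iff_left (a := 2 ^ (a - 1)) (by positivity)).mp this
    exact (Nat.not_even_iff_odd.mpr hodd') (even_iff_two_dvd.mpr h2dvd)
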